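/- In a co-tree X, if two nonminimal elements x and y are incomparable, then F₀ order embeds into X. -/

import Mathlib

/-- The co-tree `F₀`: a top element `a`, two incomparable points `b`, `c` below `a`,
and minimal points `d < b` and `e < c`, with `d`, `e` incomparable to everything else. -/
inductive F0 where
  | a | b | c | d | e
deriving DecidableEq

instance : Fintype F0 :=
  ⟨{.a, .b, .c, .d, .e}, fun x => by cases x <;> simp⟩

def F0.leb : F0 → F0 → Bool
  | _, .a => true
  | .d, .b => true
  | .e, .c => true
  | x, y => decide (x = y)

instance : PartialOrder F0 where
  le x y := F0.leb x y = true
  le_refl u := by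
    show F0.leb u u = true
    cases u <;> decide
  le_trans u v w := by
    show F0.leb u v = true → F0.leb v w = true → F0.leb u w = true
    cases u <;> cases v <;> cases w <;> decide
  le_antisymm u v := by
    show F0.leb u v = true → F0.leb v u = true → u = v
    cases u <;> cases v <;> decide



instance : DecidableRel ((· ≤ ·) : F0 → F0 → Prop) :=
  fun a b => decidable_of_iff (F0.leb a b = true) Iff.rfl

/-- If two nonminimal elements of a co-tree are incomparable, then `F₀` order embeds
into the co-tree. -/
theorem F0_orderEmbedding_of_incomparable_nonminimal {X : Type*} [PartialOrder X]
    [OrderTop X] (hchain : ∀ z : X, IsChain (· ≤ ·) (Set.Ici z))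
    (x y : X) (hx : ¬ IsMin x) (hy : ¬ IsMin y) (hxy : ¬ x ≤ y) (hyx : ¬ y ≤ x) :
    Nonempty (F0 ↪o X) := by
  obtain ⟨x', hx'⟩ := not_isMin_iff.mp hx
  obtain ⟨y', hy'⟩ := not_isMin_iff.mp hy
  have hchain' : ∀ z u v : X, z ≤ u → z ≤ v → u ≤ v ∨ v ≤ u := by
    intro z u v hu hv
    rcases eq_or_ne u v with rfl | h
    · exact Or.inl le_rfl
    · exact hchain z hu hv h
  have hx'y : ¬ x' ≤ y := fun h => (hchain' x' x y hx'.le h).elim hxy hyx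
  have hy'x : ¬ y' ≤ x := fun h => (hchain' y' y x hy'.le h).elim hyx hxy
  have hx'y' : ¬ x' ≤ y' := fun h => hx'y (h.trans hy'.le)
  have hy'x' : ¬ y' ≤ x' := fun h => hy'x (h.trans hx'.le)
  have hyx' : ¬ y ≤ x' := fun h => hyx (h.trans hx'.le)
  have hxy' : ¬ x ≤ y' := fun h => hxy (h.trans hy'.le)
  have htx : ¬ (⊤ : X) ≤ x := fun h => hyx (le_top.trans h)
  have hty : ¬ (⊤ : X) ≤ y := fun h => hxy (le_top.trans h)
  have htx' : ¬ (⊤ : X) ≤ x' := fun h => hyx' (le_top.trans h)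
  have hty' : ¬ (⊤ : X) ≤ y' := fun h => hxy' (le_top.trans h)
  refine ⟨OrderEmbedding.ofMapLEIff
    (fun u => match u with | .a => ⊤ | .b => x | .c => y | .d => x' | .e => y') ?_⟩
  intro u v
  cases u <;> cases v <;>
    first
      | exact iff_of_true le_rfl (by decide)
      | exact iff_of_true le_top (by decide)
      | exact iff_of_true hx'.le (by decide)
      | exact iff_of_true hy'.le (by decide)
      | exact iff_of_false htx (by decide)
      | exact iff_of_false hty (by decide)
      | exact iff_of_false htx' (by decide)
      | exact iff_of_false hty' (by decide)
      | exact iff_of_false hxy (by decide)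
      | exact iff_of_false hyx (by decide)
      | exact iff_of_false hx'y (by decide)
      | exact iff_of_false hy'x (by decide)
      | exact iff_of_false hx'y' (by decide)
      | exact iff_of_false hy'x' (by decide)
      | exact iff_of_false hyx' (by decide)
      | exact iff_of_false hxy' (by decide)
      | exact iff_of_false hx'.not_ge (by decide)
      | exact iff_of_false hy'.not_ge (by decide)
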